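/- arXiv:1407.7394 — 2 statements merged into one kernel-verified Lean document; each statement's English description precedes it below -/
import Mathlib

section
/- Symmetric Casoratian formula: for n ≥ 1, let f_i(x) := x^{2i−1}/(2i−1)! and consider the n×n matrix over ℚ[z] whose (i,j) entry is f_i(z + n + 1 − 2j) = (z + n + 1 − 2j)^{2i−1}/(2i−1)!. Then det( f_i(z+n+1−2j) )_{i,j=1,…,n} = (−2)^{n(n−1)/2} · Q⁰_n(z), where Q⁰_n(z) := A_n^{−1} · z^{⌊(n+1)/2⌋} · ∏_{j=1}^{n−1} (z²−j²)^{⌊(n+1−j)/2⌋} and A_n = ∏_{j=1}^n (2j−1)!!. -/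
open Polynomial

noncomputable section

/-- `A_n = ∏_{j=1}^n (2j-1)!!`. -/
def Adf (n : ℕ) : ℕ := ∏ j ∈ Finset.Icc 1 n, Nat.doubleFactorial (2 * j - 1)

/-- `Q⁰_n(z) = A_n⁻¹ z^⌊(n+1)/2⌋ ∏_{j=1}^{n-1} (z²-j²)^⌊(n+1-j)/2⌋` (for `n = 0`
this gives `Q⁰₀ = 1`). -/
def Q0 (n : ℕ) : Polynomial ℚ :=
  C ((Adf n : ℚ)⁻¹) * X ^ ((n + 1) / 2) *
    ∏ j ∈ Finset.Icc 1 (n - 1), (X ^ 2 - C ((j : ℚ) ^ 2)) ^ ((n + 1 - j) / 2)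

end

section Aux

open Finset

lemma finIoiProd {M : Type*} [CommMonoid M] {n : ℕ} (i : Fin n) (f : ℕ → M) :
    ∏ j ∈ Finset.Ioi i, f (j:ℕ) = ∏ m ∈ Finset.Ico ((i:ℕ)+1) n, f m := by
  have h0 : ∏ j ∈ Finset.Ioi i, f (j:ℕ) = ∏ m ∈ Finset.Ioc (i:ℕ) (n-1), f m := by
    rw [show ∏ j ∈ Finset.Ioi i, f (j:ℕ) = ∏ m ∈ (Finset.Ioi i).map Fin.valEmbedding, f m from (Finset.prod_map (Finset.Ioi i) Fin.valEmbedding f).symm, Fin.map_valEmbedding_Ioi]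
    congr 1; ext m; simp only [Finset.mem_Ioo, Finset.mem_Ioc]; omega
  rw [h0]
  congr 1
  have := i.isLt
  ext m; simp only [Finset.mem_Ioc, Finset.mem_Ico]; omega

lemma fin_prod_sub {n : ℕ} (i : Fin n) :
    ∏ j ∈ Finset.Ioi i, ((j:ℕ) - (i:ℕ)) = (n - 1 - (i:ℕ)).factorial := by
  rw [finIoiProd i (fun m => m - (i:ℕ)), Finset.prod_Ico_eq_prod_range]
  have h : ∀ k, (i:ℕ) + 1 + k - (i:ℕ) = k + 1 := by omega
  calc ∏ k ∈ Finset.range (n - ((i:ℕ)+1)), ((i:ℕ) + 1 + k - (i:ℕ))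
      = ∏ k ∈ Finset.range (n - ((i:ℕ)+1)), (k + 1) := by
        exact Finset.prod_congr rfl fun k _ => h k
    _ = (n - ((i:ℕ)+1)).factorial := Finset.prod_range_add_one_eq_factorial _
    _ = (n - 1 - (i:ℕ)).factorial := by congr 1; omega

/-- `Adf` as a range product. -/
lemma Adf_eq (n : ℕ) : Adf n = ∏ i ∈ Finset.range n, (2*i+1).doubleFactorial := by
  rw [Adf, ← Finset.Ico_add_one_right_eq_Icc, Finset.prod_Ico_eq_prod_range]
  exact Finset.prod_congr (by norm_num) fun k _ => by congr 1; omega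

/-- The basic `ℕ` factorial identity behind the constant computation. -/
lemma natNID (n : ℕ) :
    2^(n*(n-1)/2) * (∏ i ∈ Finset.range n, i.factorial) * Adf n
      = ∏ i ∈ Finset.range n, (2*i+1).factorial := by
  have h : ∀ i, (2*i+1).factorial = (2*i+1).doubleFactorial * (2^i * i.factorial) := fun i => by
    rw [Nat.factorial_eq_mul_doubleFactorial, Nat.doubleFactorial_two_mul]
  rw [Finset.prod_congr rfl fun i _ => h i, Finset.prod_mul_distrib, Finset.prod_mul_distrib,
    Finset.prod_pow_eq_pow_sum, Finset.sum_range_id, Adf_eq]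
  ring

lemma Adf_pos (n : ℕ) : 0 < Adf n :=
  Finset.prod_pos fun i _ => Nat.doubleFactorial_pos _

/-- The constant computation over `ℚ`. -/
lemma constL (n : ℕ) :
    (∏ i ∈ Finset.range n, (((2*i+1).factorial : ℚ))⁻¹) *
      ((-4:ℚ)^(n*(n-1)/2) * ∏ i ∈ Finset.range n, ((n-1-i).factorial : ℚ))
      = (-2:ℚ)^(n*(n-1)/2) * ((Adf n : ℚ))⁻¹ := by
  have h1 : ∏ i ∈ Finset.range n, ((n-1-i).factorial : ℚ)
      = ∏ i ∈ Finset.range n, (i.factorial : ℚ) :=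
    Finset.prod_range_reflect (fun i => (i.factorial : ℚ)) n
  have h2 : ((∏ i ∈ Finset.range n, (2*i+1).factorial : ℕ) : ℚ)
      = 2^(n*(n-1)/2) * (∏ i ∈ Finset.range n, (i.factorial : ℚ)) * (Adf n : ℚ) := by
    rw [← natNID]; push_cast; ring
  have h3 : (∏ i ∈ Finset.range n, (((2*i+1).factorial : ℚ))⁻¹)
      = ((∏ i ∈ Finset.range n, (2*i+1).factorial : ℕ) : ℚ)⁻¹ := by
    push_cast; rw [← Finset.prod_inv_distrib]
  have hf : (∏ i ∈ Finset.range n, (i.factorial : ℚ)) ≠ 0 :=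
    Finset.prod_ne_zero_iff.2 fun i _ => Nat.cast_ne_zero.2 (Nat.factorial_ne_zero i)
  have hA : ((Adf n : ℚ)) ≠ 0 := Nat.cast_ne_zero.2 (Adf_pos n).ne'
  rw [h1, h3, h2]
  have h4 : (-4:ℚ)^(n*(n-1)/2) = (-2:ℚ)^(n*(n-1)/2) * 2^(n*(n-1)/2) := by
    rw [← mul_pow]; norm_num
  rw [h4]
  field_simp

lemma fiber_eq (n s : ℕ) (hn : 1 ≤ n) (hs : s < 2*n-1) :
    ((Finset.range n ×ˢ Finset.range n).filter (fun p => p.1 ≤ p.2 ∧ p.1 + p.2 = s))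
    = Finset.image (fun i => (i, s - i)) (Finset.Icc (s - (n-1)) (s/2)) := by
  ext ⟨a, b⟩
  simp only [Finset.mem_filter, Finset.mem_product, Finset.mem_range, Finset.mem_image,
    Finset.mem_Icc, Prod.mk.injEq]
  constructor
  · rintro ⟨⟨ha, hb⟩, hab, habs⟩
    exact ⟨a, ⟨by omega, by omega⟩, rfl, by omega⟩
  · rintro ⟨i, ⟨h1, h2⟩, rfl, rfl⟩
    have h3 : 2 * i ≤ s := by
      have := Nat.div_mul_le_self s 2
      omega
    have h4 : s / 2 ≤ n - 1 := by omega
    refine ⟨⟨by omega, by omega⟩, by omega, by omega⟩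

lemma fiber_card (n s : ℕ) (hn : 1 ≤ n) (hs : s < 2*n-1) :
    (((Finset.range n ×ˢ Finset.range n).filter
        (fun p => p.1 ≤ p.2 ∧ p.1 + p.2 = s))).card = s/2 + 1 - (s - (n-1)) := by
  rw [fiber_eq n s hn hs, Finset.card_image_of_injective _ (fun a b h => congrArg Prod.fst h),
    Nat.card_Icc]

lemma pairs_to_fibers (n : ℕ) (hn : 1 ≤ n) (F : ℕ → Polynomial ℚ) :
    (∏ i ∈ Finset.range n, ∏ m ∈ Finset.Ico i n, F (i + m))
      = ∏ s ∈ Finset.range (2*n-1), F s ^ (s/2 + 1 - (s - (n-1))) := by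
  classical
  set T := (Finset.range n ×ˢ Finset.range n).filter (fun p => p.1 ≤ p.2) with hT
  have h1 : (∏ p ∈ T, F (p.1 + p.2)) = ∏ i ∈ Finset.range n, ∏ m ∈ Finset.Ico i n, F (i + m) := by
    rw [hT, Finset.prod_filter, Finset.prod_product]
    refine Finset.prod_congr rfl fun i hi => ?_
    rw [← Finset.prod_filter]
    have : (Finset.range n).filter (fun m => i ≤ m) = Finset.Ico i n := by
      ext m; simp only [Finset.mem_filter, Finset.mem_range, Finset.mem_Ico]; omega
    rw [this]
  have hmaps : ∀ p ∈ T, p.1 + p.2 ∈ Finset.range (2*n-1) := by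
    rintro ⟨a, b⟩ hp
    simp only [hT, Finset.mem_filter, Finset.mem_product, Finset.mem_range] at hp ⊢
    omega
  rw [← h1, ← Finset.prod_fiberwise_of_maps_to' hmaps F]
  refine Finset.prod_congr rfl fun s hs => ?_
  rw [Finset.prod_const, hT, Finset.filter_filter]
  rw [Finset.mem_range] at hs
  rw [fiber_card n s hn hs]

lemma fibers_split (n : ℕ) (hn : 1 ≤ n) :
    (∏ s ∈ Finset.range (2*n-1), (X + C ((n:ℚ) - 1 - (s:ℚ))) ^ (s/2 + 1 - (s - (n-1))))
    = (∏ m ∈ Finset.Icc 1 (n-1), (X + C ((m:ℕ):ℚ)) ^ ((n+1-m)/2)) *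
      ((∏ m ∈ Finset.Icc 1 (n-1), (X - C ((m:ℕ):ℚ)) ^ ((n+1-m)/2)) *
        X ^ ((n+1)/2)) := by
  set G : ℕ → Polynomial ℚ :=
    fun s => (X + C ((n:ℚ) - 1 - (s:ℚ))) ^ (s/2 + 1 - (s - (n-1))) with hG
  have hIcc : Finset.Icc 1 (n-1) = Finset.Ico 1 n := by
    rw [← Finset.Ico_add_one_right_eq_Icc]; congr 1; omega
  have hsplit : (∏ s ∈ Finset.Ico 0 (n-1), G s) * (∏ s ∈ Finset.Ico (n-1) (2*n-1), G s)
      = ∏ s ∈ Finset.range (2*n-1), G s := by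
    rw [Finset.range_eq_Ico]
    exact Finset.prod_Ico_consecutive G (by omega) (by omega)
  rw [← hsplit]
  congr 1
  -- Part A
  · rw [← Finset.range_eq_Ico, ← Finset.prod_range_reflect G (n-1), hIcc,
      Finset.prod_Ico_eq_prod_range]
    refine Finset.prod_congr rfl fun j hj => ?_
    rw [Finset.mem_range] at hj
    have hbase : (n:ℚ) - 1 - ((n - 1 - 1 - j : ℕ):ℚ) = ((1+j : ℕ):ℚ) := by
      have h : (n - 1 - 1 - j : ℕ) = n - (2+j) := by omega
      rw [h, Nat.cast_sub (by omega)]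
      push_cast; ring
    have hexp : (n-1-1-j)/2 + 1 - ((n-1-1-j) - (n-1)) = (n+1-(1+j))/2 := by omega
    rw [hG]; dsimp only; rw [hbase, hexp]
  -- Part B
  · rw [Finset.prod_Ico_eq_prod_range]
    have h2 : 2*n-1 - (n-1) = n := by omega
    rw [h2]
    obtain ⟨m, rfl⟩ : ∃ m, n = m + 1 := ⟨n - 1, by omega⟩
    rw [Finset.prod_range_succ']
    congr 1
    -- the tail terms
    · rw [hIcc, Finset.prod_Ico_eq_prod_range]
      have h3 : m + 1 - 1 = m := by omega
      rw [h3]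
      refine Finset.prod_congr rfl fun k hk => ?_
      rw [Finset.mem_range] at hk
      rw [hG]; dsimp only
      simp only [Nat.add_sub_cancel]
      rw [show ((m+1:ℕ):ℚ) - 1 - ((m + (k+1) : ℕ):ℚ) = -((1+k : ℕ):ℚ) by push_cast; ring,
        show (m+(k+1))/2 + 1 - ((m+(k+1)) - m) = ((m+1)+1-(1+k))/2 by omega,
        map_neg, ← sub_eq_add_neg]
    -- the `s = n-1` term
    · rw [hG]; dsimp only
      simp only [Nat.add_sub_cancel, Nat.add_zero]
      rw [show ((m+1:ℕ):ℚ) - 1 - ((m : ℕ):ℚ) = 0 by push_cast; ring,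
        show m/2 + 1 - (m - m) = ((m+1)+1)/2 by omega,
        map_zero, add_zero]

lemma linprod (n : ℕ) (hn : 1 ≤ n) :
    (∏ j : Fin n, (X + C ((n:ℚ) - 1 - 2 * ((j:ℕ):ℚ)))) *
      ∏ i : Fin n, ∏ j ∈ Finset.Ioi i, (X + C ((n:ℚ) - 1 - ((i:ℕ):ℚ) - ((j:ℕ):ℚ)))
    = (∏ m ∈ Finset.Icc 1 (n-1), (X + C ((m:ℕ):ℚ))^((n+1-m)/2)) *
      ((∏ m ∈ Finset.Icc 1 (n-1), (X - C ((m:ℕ):ℚ))^((n+1-m)/2)) * X^((n+1)/2)) := by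
  set F : ℕ → Polynomial ℚ := fun s => X + C ((n:ℚ) - 1 - (s:ℚ)) with hF
  have h1 : (∏ j : Fin n, (X + C ((n:ℚ) - 1 - 2 * ((j:ℕ):ℚ))))
      = ∏ i ∈ Finset.range n, F (i+i) := by
    rw [← Fin.prod_univ_eq_prod_range (fun i => F (i+i)) n]
    refine Finset.prod_congr rfl fun j _ => ?_
    rw [hF]; dsimp only; congr 2; push_cast; ring
  have h2 : (∏ i : Fin n, ∏ j ∈ Finset.Ioi i, (X + C ((n:ℚ) - 1 - ((i:ℕ):ℚ) - ((j:ℕ):ℚ))))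
      = ∏ i ∈ Finset.range n, ∏ m ∈ Finset.Ico (i+1) n, F (i+m) := by
    rw [← Fin.prod_univ_eq_prod_range (fun i => ∏ m ∈ Finset.Ico (i+1) n, F (i+m)) n]
    refine Finset.prod_congr rfl fun i _ => ?_
    rw [finIoiProd i (fun m => X + C ((n:ℚ) - 1 - ((i:ℕ):ℚ) - (m:ℚ)))]
    refine Finset.prod_congr rfl fun m _ => ?_
    rw [hF]; dsimp only; congr 2; push_cast; ring
  rw [h1, h2, ← Finset.prod_mul_distrib]
  have h3 : ∀ i ∈ Finset.range n, F (i+i) * ∏ m ∈ Finset.Ico (i+1) n, F (i+m)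
      = ∏ m ∈ Finset.Ico i n, F (i+m) := by
    intro i hi
    rw [Finset.mem_range] at hi
    rw [Finset.prod_eq_prod_Ico_succ_bot hi (fun m => F (i+m))]
  rw [Finset.prod_congr rfl h3, pairs_to_fibers n hn F]
  exact fibers_split n hn

lemma sqdiff (n : ℕ) (i j : Fin n) (hij : i < j) :
    (X + C ((n:ℚ) - 1 - 2*((j:ℕ):ℚ)))^2 - (X + C ((n:ℚ) - 1 - 2*((i:ℕ):ℚ)))^2
    = C ((-4:ℚ) * ((((j:ℕ) - (i:ℕ) : ℕ)):ℚ))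
        * (X + C ((n:ℚ) - 1 - ((i:ℕ):ℚ) - ((j:ℕ):ℚ))) := by
  have hc : ((((j:ℕ) - (i:ℕ) : ℕ)):ℚ) = ((j:ℕ):ℚ) - ((i:ℕ):ℚ) := by
    have : (i:ℕ) ≤ (j:ℕ) := le_of_lt hij
    push_cast [this]; ring
  rw [hc]
  simp only [map_sub, map_add, map_mul, map_neg, map_ofNat, map_one]
  ring

/-- The scalar constant identity. -/
lemma constFin (n : ℕ) :
    (∏ i : Fin n, (((2*(i:ℕ)+1).factorial : ℚ))⁻¹) *
      ∏ i : Fin n, ∏ j ∈ Finset.Ioi i, ((-4:ℚ) * ((((j:ℕ) - (i:ℕ) : ℕ)):ℚ))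
    = (-2:ℚ)^(n*(n-1)/2) * ((Adf n : ℚ))⁻¹ := by
  have s2 : ∀ i : Fin n, (∏ j ∈ Finset.Ioi i, ((-4:ℚ) * ((((j:ℕ) - (i:ℕ) : ℕ)):ℚ)))
      = (-4:ℚ)^(n-1-(i:ℕ)) * ((n-1-(i:ℕ)).factorial : ℚ) := by
    intro i
    rw [Finset.prod_mul_distrib, Finset.prod_const, Fin.card_Ioi]
    congr 1
    rw [show (∏ j ∈ Finset.Ioi i, ((((j:ℕ) - (i:ℕ) : ℕ)):ℚ))
        = ((∏ j ∈ Finset.Ioi i, ((j:ℕ) - (i:ℕ)) : ℕ) : ℚ) by push_cast; rfl,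
      fin_prod_sub i]
  rw [Finset.prod_congr rfl fun i _ => s2 i]
  rw [Fin.prod_univ_eq_prod_range (fun i => (((2*i+1).factorial : ℚ))⁻¹) n,
    Fin.prod_univ_eq_prod_range (fun i => (-4:ℚ)^(n-1-i) * ((n-1-i).factorial : ℚ)) n,
    Finset.prod_mul_distrib, Finset.prod_pow_eq_pow_sum]
  have hsum : ∑ i ∈ Finset.range n, (n-1-i) = n*(n-1)/2 := by
    rw [Finset.sum_range_reflect (fun i => i) n, Finset.sum_range_id]
  rw [hsum, ← mul_assoc]
  have h := constL n
  rw [← mul_assoc] at h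
  exact h

end Aux

/-- symmetric Casoratian formula: for `f_i(x) = x^{2i-1}/(2i-1)!`,
`det (f_i(z + n + 1 - 2j))_{i,j=1,…,n} = (-2)^{n(n-1)/2} Q⁰_n(z)`.
Here `i j : Fin n` are 0-indexed (`I = i+1`, `J = j+1`), so the entry is
`(z + n - 1 - 2j)^{2i+1} / (2i+1)!`. -/
theorem symmetric_casoratian_formula (n : ℕ) (hn : 1 ≤ n) :
    Matrix.det (Matrix.of fun i j : Fin n =>
        C ((((2 * (i : ℕ) + 1).factorial : ℚ))⁻¹)
          * (X + C ((n : ℚ) - 1 - 2 * ((j : ℕ) : ℚ))) ^ (2 * (i : ℕ) + 1))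
      = (-2 : Polynomial ℚ) ^ (n * (n - 1) / 2) * Q0 n := by
  set V : Fin n → Polynomial ℚ := fun j => X + C ((n:ℚ) - 1 - 2 * ((j:ℕ):ℚ)) with hV
  set a : Fin n → ℚ := fun i => (((2 * (i:ℕ) + 1).factorial : ℚ))⁻¹ with ha
  have e1 : (Matrix.of fun i j : Fin n =>
        C (a i) * (V j) ^ (2 * (i : ℕ) + 1))
      = Matrix.of fun i j : Fin n =>
          C (a i) * ((Matrix.of fun i j : Fin n => V j * ((V j)^2)^(i:ℕ)) i j) := by
    ext i j
    simp only [Matrix.of_apply]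
    congr 1
    rw [← pow_mul, pow_succ]
    ring
  rw [e1, Matrix.det_mul_column, Matrix.det_mul_row (fun j => V j) (fun i j => ((V j)^2)^(i:ℕ))]
  have e2 : Matrix.det (fun i j : Fin n => ((V j)^2)^(i:ℕ) : Matrix (Fin n) (Fin n) (Polynomial ℚ))
      = ∏ i : Fin n, ∏ j ∈ Finset.Ioi i, ((V j)^2 - (V i)^2) := by
    rw [show (fun i j : Fin n => ((V j)^2)^(i:ℕ) : Matrix (Fin n) (Fin n) (Polynomial ℚ))
        = Matrix.transpose (Matrix.vandermonde (fun j => (V j)^2)) from rfl,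
      Matrix.det_transpose, Matrix.det_vandermonde]
  rw [e2]
  have e3 : ∏ i : Fin n, ∏ j ∈ Finset.Ioi i, ((V j)^2 - (V i)^2)
      = ∏ i : Fin n, ∏ j ∈ Finset.Ioi i,
          (C ((-4:ℚ) * ((((j:ℕ) - (i:ℕ) : ℕ)):ℚ))
            * (X + C ((n:ℚ) - 1 - ((i:ℕ):ℚ) - ((j:ℕ):ℚ)))) :=
    Finset.prod_congr rfl fun i _ => Finset.prod_congr rfl fun j hj =>
      sqdiff n i j (Finset.mem_Ioi.1 hj)
  rw [e3]
  simp only [Finset.prod_mul_distrib]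
  have e4 : (∏ i : Fin n, C (a i)) = C (∏ i : Fin n, a i) := by rw [map_prod]
  have e5 : (∏ i : Fin n, ∏ j ∈ Finset.Ioi i, C ((-4:ℚ) * ((((j:ℕ) - (i:ℕ) : ℕ)):ℚ)))
      = C (∏ i : Fin n, ∏ j ∈ Finset.Ioi i, ((-4:ℚ) * ((((j:ℕ) - (i:ℕ) : ℕ)):ℚ))) := by
    simp only [map_prod]
  rw [e4, e5]
  have key : C (∏ i : Fin n, a i)
        * C (∏ i : Fin n, ∏ j ∈ Finset.Ioi i, ((-4:ℚ) * ((((j:ℕ) - (i:ℕ) : ℕ)):ℚ)))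
      = C ((-2:ℚ)^(n*(n-1)/2) * ((Adf n : ℚ))⁻¹) := by
    rw [← map_mul]
    exact congrArg C (constFin n)
  have lin := linprod n hn
  rw [← hV] at lin
  calc C (∏ i : Fin n, a i) *
        ((∏ j : Fin n, V j) *
          (C (∏ i : Fin n, ∏ j ∈ Finset.Ioi i, ((-4:ℚ) * ((((j:ℕ) - (i:ℕ) : ℕ)):ℚ))) *
            ∏ i : Fin n, ∏ j ∈ Finset.Ioi i,
              (X + C ((n:ℚ) - 1 - ((i:ℕ):ℚ) - ((j:ℕ):ℚ)))))
      = (C (∏ i : Fin n, a i) *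
          C (∏ i : Fin n, ∏ j ∈ Finset.Ioi i, ((-4:ℚ) * ((((j:ℕ) - (i:ℕ) : ℕ)):ℚ)))) *
        ((∏ j : Fin n, V j) *
          ∏ i : Fin n, ∏ j ∈ Finset.Ioi i,
            (X + C ((n:ℚ) - 1 - ((i:ℕ):ℚ) - ((j:ℕ):ℚ)))) := by ring
    _ = C ((-2:ℚ)^(n*(n-1)/2) * ((Adf n : ℚ))⁻¹) *
        ((∏ m ∈ Finset.Icc 1 (n-1), (X + C ((m:ℕ):ℚ))^((n+1-m)/2)) *
          ((∏ m ∈ Finset.Icc 1 (n-1), (X - C ((m:ℕ):ℚ))^((n+1-m)/2)) * X^((n+1)/2))) := by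
        rw [key, lin]
    _ = (-2 : Polynomial ℚ) ^ (n * (n - 1) / 2) * Q0 n := by
        rw [Q0]
        have hq : ∀ m ∈ Finset.Icc 1 (n-1), (X^2 - C ((m:ℚ)^2))^((n+1-m)/2)
            = ((X + C ((m:ℕ):ℚ))^((n+1-m)/2)) * ((X - C ((m:ℕ):ℚ))^((n+1-m)/2)) := by
          intro m _
          rw [← mul_pow]
          congr 1
          rw [map_pow]
          ring
        rw [Finset.prod_congr rfl hq, Finset.prod_mul_distrib]
        rw [map_mul, map_pow, map_neg, map_ofNat]
        ring
end

section
/- With q_k ∈ R = ℚ[t₁, t₂, t₃, …] defined as the value at z = 0 of the Casoratian Q_k of x₁, x₃, …, x_{2k−1}, the polynomial q_k is weighted homogeneous of weight k(k+1)/2 with respect to the weighting w(t_j) = j: every monomial ∏ t_j^{b_j} occurring in q_k satisfies Σ j·b_j = k(k+1)/2. -/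
open Polynomial

noncomputable section

/-- The base ring `R = ℚ[t₁, t₂, t₃, …]`: polynomials in countably many
variables `t_j = MvPolynomial.X j` (only indices `j ≥ 1` occur). -/
abbrev Rt : Type := MvPolynomial ℕ ℚ

/-- `z_j := (-1)^{j+1} (z + t_j)` as an element of `R[z]`. -/
def zj (j : ℕ) : Polynomial Rt :=
  (-1) ^ (j + 1) * (X + C (MvPolynomial.X j))

/-- The `k×k` lower Hessenberg matrix `M_k` with (1-indexed) entries
`(M_k)_{IJ} = z_{I-J+1}` for `J ≤ I`, `(M_k)_{I,I+1} = -I`, and `0` otherwise.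
Below `i j : Fin k` are 0-indexed, i.e. `I = i+1`, `J = j+1`. -/
def Mhess (k : ℕ) : Matrix (Fin k) (Fin k) (Polynomial Rt) :=
  Matrix.of fun i j =>
    if (j : ℕ) ≤ (i : ℕ) then zj ((i : ℕ) - (j : ℕ) + 1)
    else if (j : ℕ) = (i : ℕ) + 1 then -(((i : ℕ) + 1 : ℕ) : Polynomial Rt)
    else 0

/-- `x₀ := 1` and `x_k := (1/k!) det M_k` for `k ≥ 1`; these satisfy
`x_k(z+1) - x_k(z) = x_{k-1}(z)` and have generating function
`exp (Σ_{k≥1} (-1)^{k+1} (z+t_k) u^k / k)`. -/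
def xpoly (k : ℕ) : Polynomial Rt :=
  if k = 0 then 1
  else C (MvPolynomial.C ((k.factorial : ℚ)⁻¹)) * (Mhess k).det

/-- `Q_n := det (x_{2i-1}(z+j-1))_{i,j=1,…,n}`, the Casoratian of
`x₁, x₃, …, x_{2n-1}` (here `i j : Fin n` are 0-indexed, so the row function is
`x_{2i+1}` and the `j`-th column is composition with `z + j`); `Q 0 = 1`. -/
def Qcas (n : ℕ) : Polynomial Rt :=
  Matrix.det (Matrix.of fun i j : Fin n =>
    (xpoly (2 * (i : ℕ) + 1)).comp (X + C ((j : ℕ) : Rt)))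

/-- `q_k := Q_k(0) ∈ R` (so `q 0 = 1 = q₀`). -/
def qval (k : ℕ) : Rt := (Qcas k).eval 0

end


noncomputable section AuxDev
open Polynomial Matrix

-- ### auxiliary development
def Cq (r : ℚ) : Polynomial Rt := C (MvPolynomial.C r)

lemma Cq_mul (r s : ℚ) : Cq r * Cq s = Cq (r * s) := by
  simp only [Cq, ← Polynomial.C_mul, ← MvPolynomial.C_mul]

lemma Cq_natCast (n : ℕ) : ((n : ℕ) : Polynomial Rt) = Cq (n : ℚ) := by
  simp [Cq]

def xr : ℕ → Polynomial Rt
  | 0 => 1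
  | (k+1) => Cq (((k : ℚ)+1)⁻¹) *
      ∑ i ∈ Finset.range (k+1), zj (i+1) * xr (k - i)
  decreasing_by exact Nat.lt_succ_of_le (Nat.sub_le k i)

lemma xr_zero : xr 0 = 1 := by rw [xr]

lemma xr_rec (k : ℕ) :
    (((k+1 : ℕ)) : Polynomial Rt) * xr (k+1)
      = ∑ i ∈ Finset.range (k+1), zj (i+1) * xr (k - i) := by
  rw [xr, Cq_natCast, ← mul_assoc, Cq_mul]
  push_cast
  rw [mul_inv_cancel₀ (by positivity)]
  simp [Cq]

/-- reflected form of the recursion -/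
lemma xr_rec' (i : ℕ) :
    ∑ j ∈ Finset.range (i+1), zj (i - j + 1) * xr j
      = (((i+1 : ℕ)) : Polynomial Rt) * xr (i+1) := by
  rw [xr_rec]
  rw [← Finset.sum_range_reflect (fun j => zj (j+1) * xr (i - j)) (i+1)]
  apply Finset.sum_congr rfl
  intro j hj
  simp only [Finset.mem_range] at hj
  have hji : j ≤ i := Nat.lt_succ_iff.mp hj
  have h1 : i + 1 - 1 - j = i - j := by omega
  have h2 : i - (i - j) = j := by omega
  rw [h1, h2]

lemma mhess_row (k : ℕ) (i : Fin (k+1)) :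
    ∑ j : Fin (k+1), Mhess (k+1) i j * xr (j : ℕ)
      = if (i : ℕ) = k then (((k+1 : ℕ)) : Polynomial Rt) * xr (k+1) else 0 := by
  have hik : (i : ℕ) ≤ k := Nat.lt_succ_iff.mp i.isLt
  have hfin : ∑ j : Fin (k+1), Mhess (k+1) i j * xr (j : ℕ)
      = ∑ j ∈ Finset.range (k+1),
          (if j ≤ (i : ℕ) then zj ((i : ℕ) - j + 1)
           else if j = (i : ℕ) + 1 then -(((i : ℕ) + 1 : ℕ) : Polynomial Rt)
           else 0) * xr j := by
    rw [← Fin.sum_univ_eq_sum_range]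
    apply Finset.sum_congr rfl
    intro j _
    rfl
  rw [hfin]
  by_cases hik' : (i : ℕ) = k
  · rw [if_pos hik', hik', ← xr_rec']
    apply Finset.sum_congr rfl
    intro j hj
    simp only [Finset.mem_range] at hj
    rw [if_pos (Nat.lt_succ_iff.mp hj)]
  · rw [if_neg hik']
    have hlt : (i : ℕ) < k := lt_of_le_of_ne hik hik'
    have hsub : Finset.range ((i : ℕ) + 2) ⊆ Finset.range (k+1) := by
      apply Finset.range_subset_range.mpr; omega
    have hz : ∀ j ∈ Finset.range (k+1), j ∉ Finset.range ((i : ℕ) + 2) →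
        (if j ≤ (i : ℕ) then zj ((i : ℕ) - j + 1)
         else if j = (i : ℕ) + 1 then -(((i : ℕ) + 1 : ℕ) : Polynomial Rt)
         else 0) * xr j = 0 := by
      intro j _ hj
      simp only [Finset.mem_range] at hj
      have h1 : ¬ j ≤ (i : ℕ) := by omega
      have h2 : ¬ j = (i : ℕ) + 1 := by omega
      rw [if_neg h1, if_neg h2, zero_mul]
    rw [← Finset.sum_subset hsub hz]
    rw [Finset.sum_range_succ]
    have h1 : ¬ ((i : ℕ) + 1 ≤ (i : ℕ)) := by omega
    rw [if_neg h1, if_pos rfl]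
    have h2 : ∑ j ∈ Finset.range ((i : ℕ)+1),
        (if j ≤ (i : ℕ) then zj ((i : ℕ) - j + 1)
         else if j = (i : ℕ) + 1 then -(((i : ℕ) + 1 : ℕ) : Polynomial Rt)
         else 0) * xr j
        = (((i : ℕ)+1 : ℕ) : Polynomial Rt) * xr ((i : ℕ)+1) := by
      rw [← xr_rec']
      apply Finset.sum_congr rfl
      intro j hj
      simp only [Finset.mem_range] at hj
      rw [if_pos (Nat.lt_succ_iff.mp hj)]
    rw [h2]
    ring

lemma mhess_mulVec (k : ℕ) :
    (Mhess (k+1)) *ᵥ (fun j : Fin (k+1) => xr (j : ℕ))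
      = ((((k+1 : ℕ)) : Polynomial Rt) * xr (k+1)) • (Pi.single (Fin.last k) 1 : Fin (k+1) → Polynomial Rt) := by
  funext i
  show ∑ j : Fin (k+1), Mhess (k+1) i j * xr (j : ℕ) = _
  rw [mhess_row]
  by_cases hik : (i : ℕ) = k
  · have : i = Fin.last k := by
      apply Fin.ext; simpa using hik
    subst this
    simp
  · have hne : i ≠ Fin.last k := by
      intro h; apply hik; rw [h]; simp
    rw [if_neg hik]
    simp [Pi.single_eq_of_ne hne]

lemma prod_neg_diag (k : ℕ) :
    (∏ r : Fin k, -(((r : ℕ) + 1 : ℕ) : Polynomial Rt))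
      = (-1)^k * ((k.factorial : ℕ) : Polynomial Rt) := by
  have : ∀ r : Fin k, -(((r : ℕ) + 1 : ℕ) : Polynomial Rt)
      = (-1) * (((r : ℕ) + 1 : ℕ) : Polynomial Rt) := by intro r; ring
  simp_rw [this]
  rw [Finset.prod_mul_distrib, Finset.prod_const]
  congr 1
  · simp
  · rw [← Nat.cast_prod]
    congr 1
    rw [Fin.prod_univ_eq_prod_range (fun r => r + 1) k]
    exact Finset.prod_range_add_one_eq_factorial k

lemma det_update (k : ℕ) :
    ((Mhess (k+1)).updateRow (Fin.last k) (Pi.single (0 : Fin (k+1)) 1)).det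
      = ((k.factorial : ℕ) : Polynomial Rt) := by
  set B := (Mhess (k+1)).updateRow (Fin.last k) (Pi.single (0 : Fin (k+1)) 1) with hB
  rw [Matrix.det_succ_row B (Fin.last k)]
  rw [Finset.sum_eq_single (0 : Fin (k+1))]
  · have hrow : B (Fin.last k) (0 : Fin (k+1)) = 1 := by
      rw [hB, Matrix.updateRow_self]; simp
    rw [hrow, mul_one]
    have hsub : (B.submatrix (Fin.last k).succAbove (Fin.succAbove 0)).det
        = (-1)^k * ((k.factorial : ℕ) : Polynomial Rt) := by
      have hentry : ∀ r c : Fin k,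
          B.submatrix (Fin.last k).succAbove (Fin.succAbove 0) r c
            = (if (c : ℕ) + 1 ≤ (r : ℕ) then zj ((r : ℕ) - ((c : ℕ)+1) + 1)
               else if (c : ℕ) + 1 = (r : ℕ) + 1 then -(((r : ℕ) + 1 : ℕ) : Polynomial Rt)
               else 0) := by
        intro r c
        rw [Fin.succAbove_last, Fin.succAbove_zero]
        show B (r.castSucc) (c.succ) = _
        rw [hB, Matrix.updateRow_ne (Fin.castSucc_lt_last r).ne]
        show Mhess (k+1) r.castSucc c.succ = _
        simp only [Mhess, Matrix.of_apply, Fin.coe_castSucc, Fin.val_succ]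
      have htri : (B.submatrix (Fin.last k).succAbove (Fin.succAbove 0)).BlockTriangular
          ⇑OrderDual.toDual := by
        intro r c hrc
        have hrc' : (r : ℕ) < (c : ℕ) := hrc
        rw [hentry]
        have h1 : ¬ ((c : ℕ) + 1 ≤ (r : ℕ)) := by omega
        have h2 : ¬ ((c : ℕ) + 1 = (r : ℕ) + 1) := by omega
        rw [if_neg h1, if_neg h2]
      rw [Matrix.det_of_lowerTriangular _ htri]
      rw [← prod_neg_diag k]
      apply Finset.prod_congr rfl
      intro r _
      rw [hentry]
      have h1 : ¬ ((r : ℕ) + 1 ≤ (r : ℕ)) := by omega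
      rw [if_neg h1, if_pos rfl]
    rw [hsub]
    have : ((Fin.last k : Fin (k+1)) : ℕ) + ((0 : Fin (k+1)) : ℕ) = k := by simp
    rw [this]
    ring_nf
    rw [mul_comm k 2, pow_mul]
    norm_num
  · intro j _ hj
    have : B (Fin.last k) j = 0 := by
      rw [hB, Matrix.updateRow_self]
      exact Pi.single_eq_of_ne hj 1
    rw [this]
    ring
  · intro h
    exact absurd (Finset.mem_univ _) h

lemma det_mhess (k : ℕ) :
    (Mhess (k+1)).det = (((k+1).factorial : ℕ) : Polynomial Rt) * xr (k+1) := by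
  set A := Mhess (k+1) with hA
  set u : Fin (k+1) → Polynomial Rt := fun j => xr (j : ℕ) with hu
  set c : Polynomial Rt := (((k+1 : ℕ)) : Polynomial Rt) * xr (k+1) with hc
  have h1 : A.adjugate *ᵥ (A *ᵥ u) = A.det • u := by
    rw [Matrix.mulVec_mulVec, Matrix.adjugate_mul, Matrix.smul_mulVec,
      Matrix.one_mulVec]
  have h2 : A *ᵥ u = c • (Pi.single (Fin.last k) 1 : Fin (k+1) → Polynomial Rt) := mhess_mulVec k
  have h3 := congrFun h1 (0 : Fin (k+1))
  rw [h2, Matrix.mulVec_smul, Matrix.mulVec_single] at h3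
  simp only [Pi.smul_apply, smul_eq_mul, mul_one] at h3
  have hu0 : u 0 = 1 := by
    rw [hu]; simpa using xr_zero
  rw [hu0, mul_one] at h3
  simp only [MulOpposite.op_one, one_smul, Matrix.col_apply] at h3
  rw [Matrix.adjugate_apply, det_update] at h3
  rw [← h3, hc]
  rw [Nat.factorial_succ]
  push_cast
  ring

lemma xpoly_eq_xr (k : ℕ) : xpoly k = xr k := by
  cases k with
  | zero => rw [xpoly, if_pos rfl, xr_zero]
  | succ k =>
    rw [xpoly, if_neg (Nat.succ_ne_zero k), det_mhess, Cq_natCast, ← mul_assoc]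
    have : C (MvPolynomial.C (((k+1).factorial : ℚ)⁻¹)) = Cq (((k+1).factorial : ℚ)⁻¹) := rfl
    rw [this, Cq_mul, inv_mul_cancel₀ (by positivity)]
    simp [Cq]

-- ## Part 2

def ev (m : ℕ) (a : Rt) : Rt := (xr m).eval a

lemma ev_zero (a : Rt) : ev 0 a = 1 := by rw [ev, xr_zero]; simp

lemma zj_eval (i : ℕ) (a : Rt) :
    (zj (i+1)).eval a = (-1)^i * (a + MvPolynomial.X (i+1)) := by
  have : (i + 1 + 1) = i + 2 := rfl
  simp [zj, this, pow_succ]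

lemma ev_rec (k : ℕ) (a : Rt) :
    (((k+1:ℕ)) : Rt) * ev (k+1) a
      = ∑ i ∈ Finset.range (k+1), ((-1)^i * (a + MvPolynomial.X (i+1))) * ev (k-i) a := by
  have h := congrArg (Polynomial.eval a) (xr_rec k)
  simpa [ev, zj_eval, Polynomial.eval_finset_sum] using h

lemma ev_rec' (m : ℕ) (a : Rt) :
    ((m : ℕ) : Rt) * ev m a
      = ∑ i ∈ Finset.range m, ((-1)^i * (a + MvPolynomial.X (i+1))) * ev (m-1-i) a := by
  cases m with
  | zero => simp
  | succ k =>
    rw [ev_rec k a]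
    apply Finset.sum_congr rfl
    intro i hi
    rfl

lemma ev_step : ∀ k : ℕ, ∀ a : Rt, ev (k+1) (a+1) = ev (k+1) a + ev k a := by
  intro k
  induction k using Nat.strong_induction_on with
  | _ k IH =>
  intro a
  have hcan : (((k+1:ℕ)) : Rt) ≠ 0 := Nat.cast_ne_zero.mpr (Nat.succ_ne_zero k)
  apply mul_left_cancel₀ hcan
  rw [ev_rec k (a+1)]
  have hsplit : ∀ i ∈ Finset.range (k+1),
      ev (k-i) (a+1) = ev (k-i) a + (if i < k then ev (k-1-i) a else 0) := by
    intro i hi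
    simp only [Finset.mem_range] at hi
    by_cases hik : i < k
    · rw [if_pos hik]
      have h1 : k - i = (k - i - 1) + 1 := by omega
      have h2 : k - 1 - i = k - i - 1 := by omega
      rw [h1, h2, IH (k - i - 1) (by omega) a]
    · have : i = k := by omega
      subst this
      rw [if_neg hik, Nat.sub_self, ev_zero, ev_zero]
      ring
  have hexp : ∑ i ∈ Finset.range (k+1),
        ((-1)^i * ((a+1) + MvPolynomial.X (i+1))) * ev (k-i) (a+1)
      = ∑ i ∈ Finset.range (k+1),
          ((((-1)^i * (a + MvPolynomial.X (i+1))) * ev (k-i) a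
            + ((-1)^i * (a + MvPolynomial.X (i+1)))
                * (if i < k then ev (k-1-i) a else 0))
           + ((-1)^i * ev (k-i) a
            + (-1)^i * (if i < k then ev (k-1-i) a else 0))) := by
    apply Finset.sum_congr rfl
    intro i hi
    rw [hsplit i hi]
    ring
  rw [hexp]
  rw [Finset.sum_add_distrib, Finset.sum_add_distrib, Finset.sum_add_distrib]
  have hS1a : ∑ i ∈ Finset.range (k+1),
      ((-1)^i * (a + MvPolynomial.X (i+1))) * ev (k-i) a
      = (((k+1:ℕ)) : Rt) * ev (k+1) a := (ev_rec k a).symm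
  have hS1b : ∑ i ∈ Finset.range (k+1),
      ((-1)^i * (a + MvPolynomial.X (i+1))) * (if i < k then ev (k-1-i) a else 0)
      = ((k : ℕ) : Rt) * ev k a := by
    rw [Finset.sum_range_succ, if_neg (lt_irrefl k), mul_zero, add_zero]
    rw [ev_rec' k a]
    apply Finset.sum_congr rfl
    intro i hi
    simp only [Finset.mem_range] at hi
    rw [if_pos hi]
  have hS2b : ∑ i ∈ Finset.range (k+1),
      (-1 : Rt)^i * (if i < k then ev (k-1-i) a else 0)
      = ∑ i ∈ Finset.range k, (-1 : Rt)^i * ev (k-1-i) a := by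
    rw [Finset.sum_range_succ, if_neg (lt_irrefl k), mul_zero, add_zero]
    apply Finset.sum_congr rfl
    intro i hi
    simp only [Finset.mem_range] at hi
    rw [if_pos hi]
  have hS2a : ∑ i ∈ Finset.range (k+1), (-1 : Rt)^i * ev (k-i) a
      = ev k a - ∑ i ∈ Finset.range k, (-1 : Rt)^i * ev (k-1-i) a := by
    rw [Finset.sum_range_succ' (fun i => (-1 : Rt)^i * ev (k-i) a) k]
    have : ∀ i, (-1 : Rt)^(i+1) * ev (k-(i+1)) a = -((-1 : Rt)^i * ev (k-1-i) a) := by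
      intro i
      have : k - (i+1) = k - 1 - i := by omega
      rw [this, pow_succ]
      ring
    simp only [this]
    rw [Finset.sum_neg_distrib]
    simp only [pow_zero, one_mul, Nat.sub_zero]
    ring
  rw [hS1a, hS1b, hS2a, hS2b]
  push_cast
  ring
-- ## Part 3

def pp (m : ℕ) : Rt := ev m 0

lemma ev_taylor (j : ℕ) : ∀ m : ℕ,
    ev m ((j : ℕ) : Rt) = ∑ a ∈ Finset.range (m+1), (j.choose a) • pp (m-a) := by
  induction j with
  | zero =>
    intro m
    rw [Finset.sum_range_succ' (fun a => (Nat.choose 0 a) • pp (m-a)) m]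
    simp only [Nat.choose_zero_succ, zero_smul, Finset.sum_const_zero, zero_add,
      Nat.choose_self, one_smul, Nat.sub_zero, Nat.cast_zero]
    rfl
  | succ j IH =>
    intro m
    have hc : (((j+1 : ℕ)) : Rt) = ((j : ℕ) : Rt) + 1 := by push_cast; ring
    cases m with
    | zero =>
      rw [ev_zero, Finset.sum_range_one]
      simp [pp, ev_zero]
    | succ m =>
      rw [hc, ev_step m ((j : ℕ) : Rt), IH (m+1), IH m]
      rw [Finset.sum_range_succ' (fun a => ((j+1).choose a) • pp (m+1-a)) (m+1)]
      rw [Finset.sum_range_succ' (fun a => (j.choose a) • pp (m+1-a)) (m+1)]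
      simp only [Nat.choose_succ_succ, Nat.choose_zero_right, one_smul, Nat.sub_zero,
        add_smul]
      rw [Finset.sum_add_distrib]
      have : ∀ a : ℕ, m + 1 - (a+1) = m - a := fun a => by omega
      simp only [this]
      abel

-- homogeneity
local notation "w" => (fun j : ℕ => j)

lemma ihw_sum {ι : Type} {s : Finset ι} {f : ι → Rt} {n : ℕ}
    (h : ∀ i ∈ s, MvPolynomial.IsWeightedHomogeneous w (f i) n) :
    MvPolynomial.IsWeightedHomogeneous w (∑ i ∈ s, f i) n := by
  classical
  induction s using Finset.induction_on with
  | empty => simpa using MvPolynomial.isWeightedHomogeneous_zero ℚ w n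
  | insert _ _ hx ih =>
    rw [Finset.sum_insert hx]
    exact (h _ (Finset.mem_insert_self _ _)).add
      (ih fun i hi => h i (Finset.mem_insert_of_mem hi))

lemma ihw_prod {ι : Type} (s : Finset ι) (f : ι → Rt) (d : ι → ℕ)
    (h : ∀ i ∈ s, MvPolynomial.IsWeightedHomogeneous w (f i) (d i)) :
    MvPolynomial.IsWeightedHomogeneous w (∏ i ∈ s, f i) (∑ i ∈ s, d i) := by
  classical
  induction s using Finset.induction_on with
  | empty => simpa using MvPolynomial.isWeightedHomogeneous_one ℚ w
  | insert _ _ hx ih =>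
    rw [Finset.prod_insert hx, Finset.sum_insert hx]
    exact (h _ (Finset.mem_insert_self _ _)).mul
      (ih fun i hi => h i (Finset.mem_insert_of_mem hi))

lemma pp_rec (k : ℕ) :
    (((k+1:ℕ)) : Rt) * pp (k+1)
      = ∑ i ∈ Finset.range (k+1), ((-1)^i * MvPolynomial.X (i+1)) * pp (k-i) := by
  have h := ev_rec k 0
  simpa [pp] using h

lemma pp_homog : ∀ m : ℕ, MvPolynomial.IsWeightedHomogeneous w (pp m) m := by
  intro m
  induction m using Nat.strong_induction_on with
  | _ m IH =>
  cases m with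
  | zero =>
    have : pp 0 = 1 := ev_zero 0
    rw [this]
    exact MvPolynomial.isWeightedHomogeneous_one ℚ w
  | succ k =>
    have hrw : pp (k+1) = MvPolynomial.C (((k+1:ℕ) : ℚ)⁻¹)
        * ∑ i ∈ Finset.range (k+1), ((-1)^i * MvPolynomial.X (i+1)) * pp (k-i) := by
      rw [← pp_rec k]
      have hcast : (((k+1:ℕ)) : Rt) = MvPolynomial.C (((k+1:ℕ)) : ℚ) := by
        simp
      rw [hcast, ← mul_assoc, ← _root_.map_mul, inv_mul_cancel₀ (by positivity), _root_.map_one, one_mul]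
    rw [hrw]
    have h0 : MvPolynomial.IsWeightedHomogeneous w
        (MvPolynomial.C (((k+1:ℕ) : ℚ)⁻¹) : Rt) 0 :=
      MvPolynomial.isWeightedHomogeneous_C w _
    have hS : MvPolynomial.IsWeightedHomogeneous w
        (∑ i ∈ Finset.range (k+1), ((-1)^i * MvPolynomial.X (i+1)) * pp (k-i)) (k+1) := by
      apply ihw_sum
      intro i hi
      simp only [Finset.mem_range] at hi
      have hsgn : ((-1 : Rt))^i = MvPolynomial.C (((-1 : ℚ))^i) := by
        rw [map_pow, map_neg, _root_.map_one]
      have h1 : MvPolynomial.IsWeightedHomogeneous w ((-1 : Rt)^i) 0 := by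
        rw [hsgn]; exact MvPolynomial.isWeightedHomogeneous_C w _
      have h2 : MvPolynomial.IsWeightedHomogeneous w
          (MvPolynomial.X (i+1) : Rt) (i+1) :=
        MvPolynomial.isWeightedHomogeneous_X ℚ w (i+1)
      have h3 : MvPolynomial.IsWeightedHomogeneous w (pp (k-i)) (k-i) :=
        IH (k-i) (by omega)
      have := (h1.mul h2).mul h3
      have harith : 0 + (i+1) + (k-i) = k+1 := by omega
      rwa [harith] at this
    have := h0.mul hS
    rwa [zero_add] at this
-- ## Part 4 : assembly

section Assembly
variable (n : ℕ)

def Emat : Matrix (Fin n) (Fin n) Rt :=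
  Matrix.of fun i j => ev (2 * (i : ℕ) + 1) (((j : ℕ) : ℕ) : Rt)

def Fmat : Matrix (Fin n) (Fin n) Rt :=
  Matrix.of fun i a =>
    if (a : ℕ) ≤ 2 * (i : ℕ) + 1 then pp (2 * (i : ℕ) + 1 - (a : ℕ)) else 0

def Bmat : Matrix (Fin n) (Fin n) Rt :=
  Matrix.of fun a j => (((j : ℕ).choose (a : ℕ) : ℕ) : Rt)

lemma qval_eq_detE : qval n = (Emat n).det := by
  rw [qval, Qcas]
  have hev : Polynomial.eval (0 : Rt) = ⇑(Polynomial.evalRingHom (0 : Rt)) := rfl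
  rw [hev, RingHom.map_det]
  congr 1
  funext i j
  show Polynomial.eval 0 ((xpoly (2 * (i:ℕ) + 1)).comp (X + C ((j : ℕ) : Rt))) = _
  rw [Polynomial.eval_comp, xpoly_eq_xr]
  simp [Emat, ev]

lemma detB_eq_one : (Bmat n).det = 1 := by
  have htri : (Bmat n).BlockTriangular id := by
    intro a j h
    have : (j : ℕ) < (a : ℕ) := h
    show (((j : ℕ).choose (a : ℕ) : ℕ) : Rt) = 0
    rw [Nat.choose_eq_zero_of_lt this]
    simp
  rw [Matrix.det_of_upperTriangular htri]
  apply Finset.prod_eq_one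
  intro a _
  show (((a : ℕ).choose (a : ℕ) : ℕ) : Rt) = 1
  rw [Nat.choose_self]
  simp

lemma E_eq_FB : Emat n = Fmat n * Bmat n := by
  funext i j
  rw [Matrix.mul_apply]
  show ev (2 * (i : ℕ) + 1) ((j : ℕ) : Rt) = _
  rw [ev_taylor (j : ℕ) (2 * (i : ℕ) + 1)]
  set g : ℕ → Rt := fun a =>
    (if a ≤ 2 * (i : ℕ) + 1 then pp (2 * (i : ℕ) + 1 - a) else 0)
      * (((j : ℕ).choose a : ℕ) : Rt) with hg
  have hFB : ∑ a : Fin n, Fmat n i a * Bmat n a j = ∑ a ∈ Finset.range n, g a := by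
    rw [← Fin.sum_univ_eq_sum_range]
    rfl
  rw [hFB]
  set Mx := max n (2 * (i : ℕ) + 2) with hMx
  have h1 : ∑ a ∈ Finset.range n, g a = ∑ a ∈ Finset.range Mx, g a := by
    apply Finset.sum_subset (Finset.range_subset_range.mpr (le_max_left _ _))
    intro a _ ha
    simp only [Finset.mem_range, not_lt] at ha
    have : (j : ℕ) < a := lt_of_lt_of_le j.isLt ha
    rw [hg]
    simp only [Nat.choose_eq_zero_of_lt this, Nat.cast_zero, mul_zero]
  have h2a : ∑ a ∈ Finset.range (2 * (i : ℕ) + 1 + 1), (((j:ℕ).choose a)) • pp (2 * (i : ℕ) + 1 - a)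
      = ∑ a ∈ Finset.range (2 * (i : ℕ) + 1 + 1), g a := by
    apply Finset.sum_congr rfl
    intro a ha
    simp only [Finset.mem_range] at ha
    rw [hg]
    simp only [if_pos (by omega : a ≤ 2 * (i : ℕ) + 1)]
    rw [nsmul_eq_mul, mul_comm]
  have h2b : ∑ a ∈ Finset.range (2 * (i : ℕ) + 1 + 1), g a = ∑ a ∈ Finset.range Mx, g a := by
    apply Finset.sum_subset (Finset.range_subset_range.mpr (by omega))
    intro a _ ha
    simp only [Finset.mem_range, not_lt] at ha
    rw [hg]
    simp only [if_neg (by omega : ¬ a ≤ 2 * (i : ℕ) + 1), zero_mul]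
  rw [h2a, h2b, ← h1]

lemma detF_homog :
    MvPolynomial.IsWeightedHomogeneous w ((Fmat n).det) (n * (n+1) / 2) := by
  rw [Matrix.det_apply]
  apply ihw_sum
  intro σ _
  have hterm : MvPolynomial.IsWeightedHomogeneous w
      (∏ i : Fin n, Fmat n (σ i) i) (n * (n+1) / 2) := by
    by_cases hσ : ∀ i : Fin n, (i : ℕ) ≤ 2 * ((σ i : ℕ)) + 1
    · have hentry : ∀ i : Fin n, Fmat n (σ i) i = pp (2 * (σ i : ℕ) + 1 - (i : ℕ)) := by
        intro i
        show (if (i : ℕ) ≤ 2 * (σ i : ℕ) + 1 then _ else 0) = _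
        rw [if_pos (hσ i)]
      simp_rw [hentry]
      have hprod := ihw_prod Finset.univ
        (fun i : Fin n => pp (2 * (σ i : ℕ) + 1 - (i : ℕ)))
        (fun i : Fin n => 2 * (σ i : ℕ) + 1 - (i : ℕ))
        (fun i _ => pp_homog _)
      have hsum : ∑ i : Fin n, (2 * (σ i : ℕ) + 1 - (i : ℕ)) = n * (n+1) / 2 := by
        set T := ∑ i : Fin n, (i : ℕ) with hT
        have hTT : T * 2 = n * (n - 1) := by
          rw [hT, Fin.sum_univ_eq_sum_range (fun i => i) n]
          exact Finset.sum_range_id_mul_two n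
        have hperm : ∑ i : Fin n, (2 * (σ i : ℕ) + 1) = ∑ i : Fin n, (2 * (i : ℕ) + 1) :=
          Equiv.sum_comp σ (fun i : Fin n => 2 * (i : ℕ) + 1)
        have hsplit : ∑ i : Fin n, (2 * (σ i : ℕ) + 1 - (i : ℕ)) + T
            = ∑ i : Fin n, (2 * (σ i : ℕ) + 1) := by
          rw [hT, ← Finset.sum_add_distrib]
          apply Finset.sum_congr rfl
          intro i _
          have := hσ i
          omega
        have hodd : ∑ i : Fin n, (2 * (i : ℕ) + 1) = 2 * T + n := by
          rw [Finset.sum_add_distrib, ← Finset.mul_sum, Finset.sum_const,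
            Finset.card_univ, Fintype.card_fin, smul_eq_mul, mul_one, hT]
        have hS : ∑ i : Fin n, (2 * (σ i : ℕ) + 1 - (i : ℕ)) = T + n := by omega
        rw [hS]
        have hfin : (T + n) * 2 = n * (n + 1) := by
          cases n with
          | zero => simp [hT]
          | succ m =>
            have : Nat.succ m * (Nat.succ m - 1) = (m+1) * m := rfl
            rw [this] at hTT
            ring_nf
            ring_nf at hTT
            omega
        omega
      rwa [hsum] at hprod
    · push_neg at hσ
      obtain ⟨i, hi⟩ := hσ
      have hzero : Fmat n (σ i) i = 0 := by
        show (if (i : ℕ) ≤ 2 * (σ i : ℕ) + 1 then _ else 0) = 0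
        rw [if_neg (by omega)]
      have : ∏ i : Fin n, Fmat n (σ i) i = 0 :=
        Finset.prod_eq_zero (Finset.mem_univ i) hzero
      rw [this]
      exact MvPolynomial.isWeightedHomogeneous_zero ℚ w _
  rcases Int.units_eq_one_or (Equiv.Perm.sign σ) with h | h <;> rw [h]
  · simpa using hterm
  · have : ((-1 : ℤˣ) : ℤ) • ∏ i : Fin n, Fmat n (σ i) i
        = -(∏ i : Fin n, Fmat n (σ i) i) := by simp
    rw [Units.smul_def, this]
    have hneg : -(∏ i : Fin n, Fmat n (σ i) i)
        = MvPolynomial.C (-1 : ℚ) * ∏ i : Fin n, Fmat n (σ i) i := by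
      rw [map_neg, _root_.map_one]
      ring
    rw [hneg]
    have := (MvPolynomial.isWeightedHomogeneous_C w (-1 : ℚ)).mul hterm
    rwa [zero_add] at this

theorem qval_weighted_homogeneous' :
    MvPolynomial.IsWeightedHomogeneous (fun j : ℕ => j) (qval n) (n * (n + 1) / 2) := by
  have h : qval n = (Fmat n).det := by
    rw [qval_eq_detE, E_eq_FB, Matrix.det_mul, detB_eq_one, mul_one]
  rw [h]
  exact detF_homog n

end Assembly
end AuxDev

/-- `q_k` is weighted homogeneous of weight `k(k+1)/2` with
respect to the weighting `w(t_j) = j`: every monomial `∏ t_j^{d_j}` occurring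
in `q_k` satisfies `Σ j·d_j = k(k+1)/2`. -/
theorem qval_weighted_homogeneous (k : ℕ) :
    MvPolynomial.IsWeightedHomogeneous (fun j : ℕ => j) (qval k) (k * (k + 1) / 2) := by
  exact qval_weighted_homogeneous' k
end
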